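/- Let F be the 2×2 polynomial matrix with F₁₁ = 2(x₁−1)² + (x₂−1)² + (x₂−2)², F₁₂ = 3 − 2x₂, F₂₂ = 2(x₁−2)² + (x₂−1)² + (x₂−2)². For every ε ∈ (0, 1/2) there do NOT exist 2×2 SOS polynomial matrices S_{1,0}(x₁), S_{1,1}(x₁) in x₁ alone and S_{2,0}(x₂), S_{2,1}(x₂) in x₂ alone such that F(x) − (1/2 − ε)I₂ = S_{1,0}(x₁) + (4−x₁²)S_{1,1}(x₁) + S_{2,0}(x₂) + (4−x₂²)S_{2,1}(x₂). -/
import Mathlib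

open Matrix MvPolynomial

noncomputable def F11mat : Matrix (Fin 2) (Fin 2) (MvPolynomial (Fin 2) ℝ) :=
  !![2*(X 0 - 1)^2 + (X 1 - 1)^2 + (X 1 - 2)^2, 3 - 2 * X 1;
     3 - 2 * X 1, 2*(X 0 - 2)^2 + (X 1 - 1)^2 + (X 1 - 2)^2]

/-- A 2×2 polynomial matrix which is SOS and involves only the variable v. -/
def IsSOSIn (v : Fin 2) (S : Matrix (Fin 2) (Fin 2) (MvPolynomial (Fin 2) ℝ)) : Prop :=
  ∃ (s : ℕ) (R : Matrix (Fin s) (Fin 2) (MvPolynomial (Fin 2) ℝ)),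
    S = Rᵀ * R ∧ ∀ i j, (R i j).vars ⊆ {v}

lemma eval_eq_of_vars' {v : Fin 2} {p : MvPolynomial (Fin 2) ℝ} (h : p.vars ⊆ {v})
    {q1 q2 : Fin 2 → ℝ} (hq : q1 v = q2 v) : eval q1 p = eval q2 p := by
  apply eval₂Hom_congr' rfl _ rfl
  intro i hi _
  have := h hi
  simp only [Finset.mem_singleton] at this
  subst this; exact hq

lemma sos_qf {v : Fin 2} {S : Matrix (Fin 2) (Fin 2) (MvPolynomial (Fin 2) ℝ)}
    (h : IsSOSIn v S) (p : Fin 2 → ℝ) (c0 c1 : ℝ) :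
    0 ≤ c0 * c0 * eval p (S 0 0) + c0 * c1 * eval p (S 0 1)
      + c1 * c0 * eval p (S 1 0) + c1 * c1 * eval p (S 1 1) := by
  obtain ⟨s, R, rfl, -⟩ := h
  simp only [Matrix.mul_apply, Matrix.transpose_apply, map_sum, _root_.map_mul, Finset.mul_sum]
  rw [← Finset.sum_add_distrib, ← Finset.sum_add_distrib, ← Finset.sum_add_distrib]
  apply Finset.sum_nonneg
  intro k _
  nlinarith [sq_nonneg (c0 * eval p (R k 0) + c1 * eval p (R k 1))]

lemma sos_vars {v : Fin 2} {S : Matrix (Fin 2) (Fin 2) (MvPolynomial (Fin 2) ℝ)}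
    (h : IsSOSIn v S) (i j : Fin 2) : (S i j).vars ⊆ {v} := by
  obtain ⟨s, R, rfl, hR⟩ := h
  simp only [Matrix.mul_apply, Matrix.transpose_apply]
  refine (vars_sum_subset _ _).trans ?_
  apply Finset.biUnion_subset.2
  intro k _
  exact (vars_mul _ _).trans (Finset.union_subset (hR k i) (hR k j))

/-- For every ε ∈ (0,1/2) there is no correlatively sparse weighted SOS representation
F(x) − (1/2 − ε)I₂ = S₁₀(x₁) + (4−x₁²)S₁₁(x₁) + S₂₀(x₂) + (4−x₂²)S₂₁(x₂)
with SOS matrices S₁₀,S₁₁ in x₁ alone and S₂₀,S₂₁ in x₂ alone. -/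
theorem stmt_11 (ε : ℝ) (hε0 : 0 < ε) (hε : ε < 1/2) :
    ¬ ∃ S10 S11 S20 S21 : Matrix (Fin 2) (Fin 2) (MvPolynomial (Fin 2) ℝ),
        IsSOSIn 0 S10 ∧ IsSOSIn 0 S11 ∧ IsSOSIn 1 S20 ∧ IsSOSIn 1 S21 ∧
          F11mat - (MvPolynomial.C (1/2 - ε) : MvPolynomial (Fin 2) ℝ) • (1 : Matrix (Fin 2) (Fin 2) (MvPolynomial (Fin 2) ℝ)) =
            S10 + ((4 : MvPolynomial (Fin 2) ℝ) - X 0 ^ 2) • S11 +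
              S20 + ((4 : MvPolynomial (Fin 2) ℝ) - X 1 ^ 2) • S21 := by
  rintro ⟨S10, S11, S20, S21, h10, h11, h20, h21, heq⟩
  -- entrywise evaluations of the identity at five points
  have E1 := congrArg (fun M => eval ![1,0] (M 0 0)) heq
  have E2 := congrArg (fun M => eval ![2,0] (M 1 1)) heq
  have Q100 := congrArg (fun M => eval ![0,1] (M 0 0)) heq
  have Q101 := congrArg (fun M => eval ![0,1] (M 0 1)) heq
  have Q110 := congrArg (fun M => eval ![0,1] (M 1 0)) heq
  have Q111 := congrArg (fun M => eval ![0,1] (M 1 1)) heq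
  have Q200 := congrArg (fun M => eval ![0,2] (M 0 0)) heq
  have Q201 := congrArg (fun M => eval ![0,2] (M 0 1)) heq
  have Q210 := congrArg (fun M => eval ![0,2] (M 1 0)) heq
  have Q211 := congrArg (fun M => eval ![0,2] (M 1 1)) heq
  have O00 := congrArg (fun M => eval ![0,0] (M 0 0)) heq
  have O11 := congrArg (fun M => eval ![0,0] (M 1 1)) heq
  simp only [F11mat, Matrix.sub_apply, Matrix.add_apply, Matrix.smul_apply, smul_eq_mul,
    Matrix.one_apply_eq, Matrix.one_apply_ne, Matrix.cons_val', Matrix.cons_val_zero,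
    Matrix.cons_val_one, Matrix.head_cons, Matrix.empty_val', Matrix.cons_val_fin_one,
    Matrix.head_fin_const, Matrix.of_apply, map_sub, map_add, _root_.map_mul, map_pow,
    eval_X, eval_C, map_ofNat, _root_.map_one, Fin.zero_eta, Fin.mk_one, ne_eq, Fin.one_eq_zero_iff,
    OfNat.ofNat_ne_one, not_false_eq_true, zero_ne_one, mul_zero, mul_one]
    at E1 E2 Q100 Q101 Q110 Q111 Q200 Q201 Q210 Q211 O00 O11
  norm_num at E1 E2 Q100 Q101 Q110 Q111 Q200 Q201 Q210 Q211 O00 O11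
  -- invariance of the x₁-only matrices under changing the second coordinate
  have v10 : ∀ i j : Fin 2, eval ![0,1] (S10 i j) = eval ![0,0] (S10 i j) ∧
      eval ![0,2] (S10 i j) = eval ![0,0] (S10 i j) := fun i j =>
    ⟨eval_eq_of_vars' (sos_vars h10 i j) rfl, eval_eq_of_vars' (sos_vars h10 i j) rfl⟩
  have v11 : ∀ i j : Fin 2, eval ![0,1] (S11 i j) = eval ![0,0] (S11 i j) ∧
      eval ![0,2] (S11 i j) = eval ![0,0] (S11 i j) := fun i j =>
    ⟨eval_eq_of_vars' (sos_vars h11 i j) rfl, eval_eq_of_vars' (sos_vars h11 i j) rfl⟩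
  have v20a : eval ![1,0] (S20 0 0) = eval ![0,0] (S20 0 0) :=
    eval_eq_of_vars' (sos_vars h20 0 0) rfl
  have v20b : eval ![2,0] (S20 1 1) = eval ![0,0] (S20 1 1) :=
    eval_eq_of_vars' (sos_vars h20 1 1) rfl
  have v21a : eval ![1,0] (S21 0 0) = eval ![0,0] (S21 0 0) :=
    eval_eq_of_vars' (sos_vars h21 0 0) rfl
  have v21b : eval ![2,0] (S21 1 1) = eval ![0,0] (S21 1 1) :=
    eval_eq_of_vars' (sos_vars h21 1 1) rfl
  -- nonnegativity facts from the SOS structure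
  have a1 := sos_qf h10 ![1,0] 1 0
  have a2 := sos_qf h10 ![2,0] 0 1
  have b1 := sos_qf h11 ![1,0] 1 0
  have c1 := sos_qf h20 ![0,1] 1 (-1)
  have c2 := sos_qf h20 ![0,2] 1 1
  have d1 := sos_qf h21 ![0,1] 1 (-1)
  obtain ⟨v10a, v10b⟩ := v10 0 0
  obtain ⟨v10c, v10d⟩ := v10 0 1
  obtain ⟨v10e, v10f⟩ := v10 1 0
  obtain ⟨v10g, v10h⟩ := v10 1 1
  obtain ⟨v11a, v11b⟩ := v11 0 0
  obtain ⟨v11c, v11d⟩ := v11 0 1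
  obtain ⟨v11e, v11f⟩ := v11 1 0
  obtain ⟨v11g, v11h⟩ := v11 1 1
  norm_num at a1 a2 b1 c1 c2 d1
  linarith [E1, E2, Q100, Q101, Q110, Q111, Q200, Q201, Q210, Q211, O00, O11]
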